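/- Let α and β be permutations of the vertex set of a finite graph Γ. Then (α, β) is a TFS-morphism of Γ if and only if αβ⁻¹ is a derangement (fixes no vertex) and (α, β) is a TF-morphism of the complement graph of Γ. -/
import Mathlib


def IsTF {V : Type*} (G : SimpleGraph V) (α β : Equiv.Perm V) : Prop :=
  ∀ u v : V, G.Adj u v → G.Adj (α u) (β v)

def IsTFS {V : Type*} (G : SimpleGraph V) (α β : Equiv.Perm V) : Prop :=
  (∀ u : V, G.Adj (α u) (β u)) ∧
    ∀ u v : V, G.Adj u v → G.Adj (α u) (β v) ∨ α u = β v

lemma mapsTo_compl_of_mapsTo {W : Type*} [Fintype W] {f : W → W}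
    (hf : Function.Injective f) {s : Set W} (h : Set.MapsTo f s s) :
    Set.MapsTo f sᶜ sᶜ := by
  have hbij : Set.BijOn f s s :=
    (Set.Finite.injOn_iff_bijOn_of_mapsTo s.toFinite h).1 (hf.injOn)
  intro p hp hfp
  obtain ⟨q, hq, hfq⟩ := hbij.surjOn hfp
  exact hp (hf hfq ▸ hq)

theorem stmt2 {V : Type*} [Fintype V] (G : SimpleGraph V) (α β : Equiv.Perm V) :
    IsTFS G α β ↔ ((∀ u : V, (α * β⁻¹) u ≠ u) ∧ IsTF Gᶜ α β) := by
  have hne : (∀ u : V, (α * β⁻¹) u ≠ u) ↔ ∀ u : V, α u ≠ β u := by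
    constructor
    · intro h u hu
      exact h (β u) (by simp [Equiv.Perm.mul_apply, hu])
    · intro h u hu
      exact h (β⁻¹ u) (by simpa [Equiv.Perm.mul_apply] using hu)
  -- the reflexive closure relation as a set of pairs
  set s : Set (V × V) := {p | G.Adj p.1 p.2 ∨ p.1 = p.2} with hs
  set f : V × V → V × V := fun p => (α p.1, β p.2) with hfdef
  have hfinj : Function.Injective f := by
    intro p q hpq
    simp only [hfdef, Prod.ext_iff] at hpq ⊢
    exact ⟨α.injective hpq.1, β.injective hpq.2⟩
  have hcompl : ∀ p : V × V, p ∈ sᶜ ↔ Gᶜ.Adj p.1 p.2 := by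
    intro p
    simp only [hs, Set.mem_compl_iff, Set.mem_setOf_eq, SimpleGraph.compl_adj]
    tauto
  constructor
  · rintro ⟨h1, h2⟩
    refine ⟨hne.2 fun u => (h1 u).ne, ?_⟩
    have hm : Set.MapsTo f s s := by
      rintro ⟨u, v⟩ (h | h)
      · exact h2 u v h
      · simp only at h; subst h; exact Or.inl (h1 u)
    intro u v huv
    have h' : ((u, v) : V × V) ∈ sᶜ := (hcompl (u, v)).2 huv
    exact (hcompl (f (u, v))).1 (mapsTo_compl_of_mapsTo hfinj hm h')
  · rintro ⟨h1, h2⟩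
    have h1' := hne.1 h1
    have hm : Set.MapsTo f sᶜ sᶜ := by
      intro p hp
      exact (hcompl (f p)).2 (h2 p.1 p.2 ((hcompl p).1 hp))
    have hm' : Set.MapsTo f s s := by
      have := mapsTo_compl_of_mapsTo hfinj hm
      simpa using this
    constructor
    · intro u
      have : f (u, u) ∈ s := hm' (Or.inr rfl)
      rcases this with h | h
      · exact h
      · exact absurd h (h1' u)
    · intro u v huv
      have : f (u, v) ∈ s := hm' (Or.inl huv)
      rcases this with h | h
      · exact Or.inl h
      · exact Or.inr h
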